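/- Let (X,⊳) be a spindle and consider rack homology with ∂^R = ∂^{⊳₀} − ∂^⊳ (⊳₀ the trivial operation). The doubling map s(x_n,…,x_0) = (−1)^n (x_n, x_n, x_{n-1},…,x_0) commutes with the rack differential: ∂^R s(𝐱) = s(∂^R 𝐱) for every generator 𝐱 ∈ X^{n+1}. -/
import Mathlib


def face {X : Type*} (op : X → X → X) {n : ℕ} (i : Fin (n+1)) (f : Fin (n+1) → X) :
    Fin n → X :=
  fun k => if (k : ℕ) < (i : ℕ) then f k.castSucc else op (f k.succ) (f i)

noncomputable def oneTermDiff {X : Type*} (R : Type*) [CommRing R] (op : X → X → X) (n : ℕ) :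
    ((Fin (n+1) → X) →₀ R) →ₗ[R] ((Fin n → X) →₀ R) :=
  ∑ i : Fin (n+1), ((-1 : R) ^ (n - (i : ℕ))) • Finsupp.lmapDomain R R (face op i)

/-- The rack differential `∂^R = ∂^{⊳₀} − ∂^⊳`, where `⊳₀` is the trivial operation. -/
noncomputable def rackDiff {X : Type} (R : Type) [CommRing R] (op : X → X → X) (n : ℕ) :
    ((Fin (n+1) → X) →₀ R) →ₗ[R] ((Fin n → X) →₀ R) :=
  oneTermDiff R (fun x (_ : X) => x) n - oneTermDiff R op n

/-- The doubling map `s(x_n,…,x_0) = (−1)^n (x_n,x_n,x_{n-1},…,x_0)`. -/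
noncomputable def doublingR {X : Type} (R : Type) [CommRing R] (n : ℕ) :
    ((Fin (n+1) → X) →₀ R) →ₗ[R] ((Fin (n+2) → X) →₀ R) :=
  Finsupp.lsum R fun f =>
    ((-1 : R) ^ n) • (Finsupp.lsingle (Fin.snoc f (f (Fin.last n))) : R →ₗ[R] _)

/- ### Auxiliary lemmas -/

lemma doublingR_single {X : Type} (R : Type) [CommRing R] (n : ℕ) (f : Fin (n+1) → X) (c : R) :
    doublingR R n (Finsupp.single f c)
      = ((-1:R)^n) • Finsupp.single (Fin.snoc f (f (Fin.last n))) c := by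
  simp [doublingR]

lemma oneTermDiff_single {X : Type} (R : Type) [CommRing R] (op : X → X → X) (n : ℕ)
    (f : Fin (n+1) → X) (c : R) :
    oneTermDiff R op n (Finsupp.single f c)
      = ∑ i : Fin (n+1), ((-1:R)^(n - (i:ℕ))) • Finsupp.single (face op i f) c := by
  simp [oneTermDiff, LinearMap.sum_apply, Finsupp.lmapDomain_apply, Finsupp.mapDomain_single]

lemma rackDiff_single {X : Type} (R : Type) [CommRing R] (op : X → X → X) (n : ℕ)
    (f : Fin (n+1) → X) (c : R) :
    rackDiff R op n (Finsupp.single f c)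
      = ∑ i : Fin (n+1), ((-1:R)^(n - (i:ℕ))) •
          (Finsupp.single (face (fun x (_ : X) => x) i f) c - Finsupp.single (face op i f) c) := by
  simp [rackDiff, LinearMap.sub_apply, oneTermDiff_single, smul_sub, Finset.sum_sub_distrib]

lemma face_castSucc_snoc {X : Type} (op : X → X → X) (n : ℕ) (f : Fin (n+2) → X) (i : Fin (n+1)) :
    face op (i.castSucc.castSucc) (Fin.snoc f (f (Fin.last (n+1))))
      = Fin.snoc (face op i.castSucc f) (op (f (Fin.last (n+1))) (f i.castSucc)) := by
  funext k
  refine Fin.lastCases ?_ ?_ k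
  · simp only [face, Fin.snoc_last, Fin.val_last, Fin.coe_castSucc]
    rw [if_neg (by omega)]
    rw [Fin.succ_last, Fin.snoc_last, Fin.snoc_castSucc]
  · intro k'
    simp only [face, Fin.snoc_castSucc, Fin.coe_castSucc, Fin.succ_castSucc]

lemma face_last_val {X : Type} (op : X → X → X) (n : ℕ) (f : Fin (n+2) → X) (i : Fin (n+1)) :
    face op i.castSucc f (Fin.last n) = op (f (Fin.last (n+1))) (f i.castSucc) := by
  simp only [face, Fin.val_last, Fin.coe_castSucc]
  rw [if_neg (by omega), Fin.succ_last]

lemma face_snoc_sublast {X : Type} (op : X → X → X) (n : ℕ) (f : Fin (n+2) → X)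
    (h : op (f (Fin.last (n+1))) (f (Fin.last (n+1))) = f (Fin.last (n+1))) :
    face op ((Fin.last (n+1)).castSucc) (Fin.snoc f (f (Fin.last (n+1)))) = f := by
  funext k
  refine Fin.lastCases ?_ ?_ k
  · simp only [face, Fin.val_last, Fin.coe_castSucc]
    rw [if_neg (by omega), Fin.succ_last, Fin.snoc_last, Fin.snoc_castSucc, h]
  · intro k'
    simp only [face, Fin.coe_castSucc, Fin.val_last]
    rw [if_pos (by omega), Fin.snoc_castSucc]

lemma face_snoc_last {X : Type} (op : X → X → X) (n : ℕ) (f : Fin (n+2) → X) (y : X) :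
    face op (Fin.last (n+2)) (Fin.snoc f y) = f := by
  funext k
  simp only [face, Fin.val_last]
  rw [if_pos (by omega), Fin.snoc_castSucc]

lemma face_last {X : Type} (op : X → X → X) (n : ℕ) (f : Fin (n+2) → X) :
    face op (Fin.last (n+1)) f = fun k => f k.castSucc := by
  funext k
  simp only [face, Fin.val_last]
  rw [if_pos (by omega)]

/-- For a spindle `(X,⊳)` the doubling map commutes with the rack differential:
`∂^R(s 𝐱) = s(∂^R 𝐱)` for every generator `𝐱 ∈ X^{n+1}` (in degree `0`, where `∂^R`
vanishes on `C_0`, this reads `∂^R(s 𝐱) = 0`). -/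
theorem doubling_commutes_with_rack_differential
    {X : Type} (R : Type) [CommRing R] (op : X → X → X)
    (hidem : ∀ x : X, op x x = x)
    (hshelf : ∀ x y z : X, op (op x y) z = op (op x z) (op y z)) :
    (∀ (n : ℕ) (f : Fin (n+2) → X),
      rackDiff R op (n+2) (doublingR R (n+1) (Finsupp.single f (1 : R)))
        = doublingR R n (rackDiff R op (n+1) (Finsupp.single f (1 : R))))
    ∧ (∀ f : Fin 1 → X,
      rackDiff R op 1 (doublingR R 0 (Finsupp.single f (1 : R))) = 0) := by
  constructor
  · intro n f
    rw [doublingR_single, map_smul, rackDiff_single, rackDiff_single, map_sum]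
    -- split the sum over `Fin (n+3)` on the left
    rw [Fin.sum_univ_castSucc (n := n+2), Fin.sum_univ_castSucc (n := n+1)]
    -- the two extra terms on the left vanish
    rw [face_snoc_sublast (fun x (_:X) => x) n f rfl,
        face_snoc_sublast op n f (hidem _),
        face_snoc_last (fun x (_:X) => x) n f,
        face_snoc_last op n f]
    rw [sub_self, smul_zero, smul_zero, add_zero, add_zero]
    -- split the sum over `Fin (n+2)` on the right; its last term vanishes
    rw [Fin.sum_univ_castSucc (n := n+1)]
    rw [face_last (fun x (_:X) => x) n f, face_last op n f, sub_self, smul_zero, map_zero,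
        add_zero]
    rw [Finset.smul_sum]
    refine Finset.sum_congr rfl fun i _ => ?_
    rw [face_castSucc_snoc (fun x (_:X) => x) n f i, face_castSucc_snoc op n f i,
        map_smul, map_sub, doublingR_single, doublingR_single,
        face_last_val (fun x (_:X) => x) n f i, face_last_val op n f i]
    rw [← smul_sub, smul_smul, smul_smul]
    congr 1
    obtain ⟨iv, hiv⟩ := i
    simp only [Fin.coe_castSucc, Fin.castSucc_mk]
    have h2 : n + 2 - iv = (n - iv) + 2 := by omega
    have h1 : n + 1 - iv = (n - iv) + 1 := by omega
    rw [h1, h2, pow_add, pow_add]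
    ring
  · intro f
    rw [doublingR_single, pow_zero, one_smul, rackDiff_single, Fin.sum_univ_two]
    have hface : ∀ (op' : X → X → X), op' (f 0) (f 0) = f 0 →
        ∀ i : Fin 2, face op' i (Fin.snoc f (f (Fin.last 0))) = fun _ => f 0 := by
      intro op' h i
      funext k
      fin_cases k <;> fin_cases i <;>
        simp [face, Fin.snoc, Fin.last, h, Fin.fin_one_eq_zero]
    rw [hface (fun x (_:X) => x) rfl 0 |>.trans (hface op (hidem _) 0).symm,
        hface (fun x (_:X) => x) rfl 1 |>.trans (hface op (hidem _) 1).symm]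
    simp
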